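/- arXiv:1201.3897 — 3 statements merged into one kernel-verified Lean document; each statement's English description precedes it below -/
import Mathlib

section
/- If a decomposition G of a compact metric space X is shrinkable, then the quotient map π: X → X/G is a uniform limit of homeomorphisms; in particular X/G is homeomorphic to X. -/
open Set Filter Topology


section ShrinkAux

variable {X : Type*} [MetricSpace X] [CompactSpace X]
variable {G : Set (Set X)} {r : X → X → Prop}

lemma shrink_aux_equiv (hcov : ∀ x : X, ∃ g ∈ G, x ∈ g)
    (hdisj : ∀ g ∈ G, ∀ g' ∈ G, g ≠ g' → Disjoint g g')
    (hr : ∀ x y, r x y ↔ ∃ g ∈ G, x ∈ g ∧ y ∈ g) : Equivalence r := by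
  constructor
  · intro x
    obtain ⟨g, hg, hx⟩ := hcov x
    exact (hr x x).2 ⟨g, hg, hx, hx⟩
  · intro x y h
    obtain ⟨g, hg, hx, hy⟩ := (hr x y).1 h
    exact (hr y x).2 ⟨g, hg, hy, hx⟩
  · intro x y z hxy hyz
    obtain ⟨g, hg, hx, hy⟩ := (hr x y).1 hxy
    obtain ⟨g', hg', hy', hz⟩ := (hr y z).1 hyz
    have hgg : g = g' := by
      by_contra hne
      exact Set.disjoint_left.1 (hdisj g hg g' hg' hne) hy hy'
    exact (hr x z).2 ⟨g, hg, hx, hgg ▸ hz⟩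

lemma shrink_aux_mk_eq (he : Equivalence r) (z w : X) :
    Quot.mk r z = Quot.mk r w ↔ r z w :=
  ⟨fun h => he.eqvGen_iff.1 (Quot.eqvGen_exact h), fun h => Quot.sound h⟩

/-- membership of a fiber: if `x ∈ g ∈ G` and `π z = π x` then `z ∈ g`. -/
lemma shrink_aux_mem (hdisj : ∀ g ∈ G, ∀ g' ∈ G, g ≠ g' → Disjoint g g')
    (hr : ∀ x y, r x y ↔ ∃ g ∈ G, x ∈ g ∧ y ∈ g) (he : Equivalence r)
    {g : Set X} (hg : g ∈ G) {x z : X} (hx : x ∈ g)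
    (h : Quot.mk r z = Quot.mk r x) : z ∈ g := by
  obtain ⟨g', hg', hz, hx'⟩ := (hr z x).1 ((shrink_aux_mk_eq he z x).1 h)
  have : g' = g := by
    by_contra hne
    exact Set.disjoint_left.1 (hdisj g' hg' g hg hne) hx' hx
  exact this ▸ hz

lemma shrink_aux_t2
    (hne : ∀ g ∈ G, g.Nonempty)
    (hcpt : ∀ g ∈ G, IsCompact g)
    (hcov : ∀ x : X, ∃ g ∈ G, x ∈ g)
    (hdisj : ∀ g ∈ G, ∀ g' ∈ G, g ≠ g' → Disjoint g g')
    (hr : ∀ x y, r x y ↔ ∃ g ∈ G, x ∈ g ∧ y ∈ g)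
    (husc : IsClosedMap (Quot.mk r)) : T2Space (Quot r) := by
  have he := shrink_aux_equiv hcov hdisj hr
  constructor
  intro a b hab
  obtain ⟨x, rfl⟩ := Quot.exists_rep a
  obtain ⟨y, rfl⟩ := Quot.exists_rep b
  obtain ⟨gx, hgx, hxx⟩ := hcov x
  obtain ⟨gy, hgy, hyy⟩ := hcov y
  have hgne : gx ≠ gy := by
    rintro rfl
    exact hab ((shrink_aux_mk_eq he x y).2 ((hr x y).2 ⟨gx, hgx, hxx, hyy⟩))
  obtain ⟨U, V, hU, hV, hgxU, hgyV, hUV⟩ :=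
    SeparatedNhds.of_isCompact_isCompact (hcpt _ hgx) (hcpt _ hgy) (hdisj _ hgx _ hgy hgne)
  refine ⟨(Quot.mk r '' Uᶜ)ᶜ, (Quot.mk r '' Vᶜ)ᶜ,
    (husc _ hU.isClosed_compl).isOpen_compl, (husc _ hV.isClosed_compl).isOpen_compl, ?_, ?_, ?_⟩
  · rintro ⟨z, hz, hzx⟩
    exact hz (hgxU (shrink_aux_mem hdisj hr he hgx hxx hzx))
  · rintro ⟨z, hz, hzy⟩
    exact hz (hgyV (shrink_aux_mem hdisj hr he hgy hyy hzy))
  · rw [Set.disjoint_left]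
    intro c hcU hcV
    obtain ⟨w, rfl⟩ := Quot.exists_rep c
    have hwU : w ∈ U := by
      by_contra hw
      exact hcU ⟨w, hw, rfl⟩
    have hwV : w ∈ V := by
      by_contra hw
      exact hcV ⟨w, hw, rfl⟩
    exact Set.disjoint_left.1 hUV hwU hwV

lemma shrink_aux_sct
    (hne : ∀ g ∈ G, g.Nonempty)
    (hcpt : ∀ g ∈ G, IsCompact g)
    (hcov : ∀ x : X, ∃ g ∈ G, x ∈ g)
    (hdisj : ∀ g ∈ G, ∀ g' ∈ G, g ≠ g' → Disjoint g g')
    (hr : ∀ x y, r x y ↔ ∃ g ∈ G, x ∈ g ∧ y ∈ g)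
    (husc : IsClosedMap (Quot.mk r)) : SecondCountableTopology (Quot r) := by
  classical
  have he := shrink_aux_equiv hcov hdisj hr
  obtain ⟨B, hBc, -, hBbasis⟩ := TopologicalSpace.exists_countable_basis X
  set 𝓑 : Set (Set (Quot r)) :=
    (fun S : Set (Set X) => (Quot.mk r '' (⋃₀ S)ᶜ)ᶜ) '' {S | S.Finite ∧ S ⊆ B} with h𝓑
  have hcount : 𝓑.Countable := (Set.countable_setOf_finite_subset hBc).image _
  refine TopologicalSpace.IsTopologicalBasis.secondCountableTopology
    (TopologicalSpace.isTopologicalBasis_of_isOpen_of_nhds ?_ ?_) hcount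
  · rintro u ⟨S, ⟨hSfin, hSB⟩, rfl⟩
    have hopen : IsOpen (⋃₀ S) := isOpen_sUnion fun t ht => hBbasis.isOpen (hSB ht)
    exact (husc _ hopen.isClosed_compl).isOpen_compl
  · intro a U haU hUopen
    obtain ⟨x, rfl⟩ := Quot.exists_rep a
    obtain ⟨g, hg, hx⟩ := hcov x
    have hgsub : g ⊆ Quot.mk r ⁻¹' U := by
      intro z hz
      have : Quot.mk r z = Quot.mk r x :=
        (shrink_aux_mk_eq he z x).2 ((hr z x).2 ⟨g, hg, hz, hx⟩)
      simpa [Set.mem_preimage, this] using haU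
    have hgopen : IsOpen (Quot.mk r ⁻¹' U) := hUopen.preimage continuous_quot_mk
    have hbas : ∀ z : g, ∃ t ∈ B, (z : X) ∈ t ∧ t ⊆ Quot.mk r ⁻¹' U := fun z =>
      hBbasis.exists_subset_of_mem_open (hgsub z.2) hgopen
    choose t htB htz hts using hbas
    obtain ⟨s, hs⟩ := (hcpt g hg).elim_finite_subcover t
      (fun z => hBbasis.isOpen (htB z)) (fun z hz => Set.mem_iUnion.2 ⟨⟨z, hz⟩, htz _⟩)
    set S : Set (Set X) := t '' ↑s with hS
    have hSfin : S.Finite := s.finite_toSet.image _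
    have hSB : S ⊆ B := by
      rintro - ⟨z, -, rfl⟩
      exact htB z
    have hgS : g ⊆ ⋃₀ S := by
      intro z hz
      obtain ⟨w, hws, hw⟩ := Set.mem_iUnion₂.1 (hs hz)
      exact ⟨t w, ⟨w, hws, rfl⟩, hw⟩
    have hSU : ⋃₀ S ⊆ Quot.mk r ⁻¹' U := by
      rintro z ⟨-, ⟨w, -, rfl⟩, hzw⟩
      exact hts w hzw
    refine ⟨(Quot.mk r '' (⋃₀ S)ᶜ)ᶜ, ⟨S, ⟨hSfin, hSB⟩, rfl⟩, ?_, ?_⟩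
    · rintro ⟨w, hw, hwx⟩
      exact hw (hgS (shrink_aux_mem hdisj hr he hg hx hwx))
    · intro c hc
      obtain ⟨w, rfl⟩ := Quot.exists_rep c
      have : w ∈ ⋃₀ S := by
        by_contra hw
        exact hc ⟨w, hw, rfl⟩
      exact hSU this

end ShrinkAux


/-- If a (usc, into compact sets) decomposition `G` of a compact metric
space `X` is shrinkable, then the quotient map `π : X → X/G` can be approximated by
homeomorphisms (arbitrarily closely with respect to any open cover of `X/G`); in
particular `X/G` is homeomorphic to `X`. -/
theorem shrinkable_quotient_near_homeomorphism
    {X : Type*} [MetricSpace X] [CompactSpace X]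
    (G : Set (Set X))
    (hne : ∀ g ∈ G, g.Nonempty)
    (hcpt : ∀ g ∈ G, IsCompact g)
    (hcov : ∀ x : X, ∃ g ∈ G, x ∈ g)
    (hdisj : ∀ g ∈ G, ∀ g' ∈ G, g ≠ g' → Disjoint g g')
    (r : X → X → Prop)
    (hr : ∀ x y, r x y ↔ ∃ g ∈ G, x ∈ g ∧ y ∈ g)
    (husc : IsClosedMap (Quot.mk r))
    -- shrinkability:
    (hshrink : ∀ (𝒰 : Set (Set (Quot r))), (∀ U ∈ 𝒰, IsOpen U) → ⋃₀ 𝒰 = Set.univ →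
      ∀ (𝒱 : Set (Set X)), (∀ V ∈ 𝒱, IsOpen V) → ⋃₀ 𝒱 = Set.univ →
      ∃ h : X ≃ₜ X,
        (∀ x : X, ∃ U ∈ 𝒰, x ∈ Quot.mk r ⁻¹' U ∧ h x ∈ Quot.mk r ⁻¹' U) ∧
        (∀ g ∈ G, ∃ V ∈ 𝒱, h '' g ⊆ V)) :
    (∀ (𝒰 : Set (Set (Quot r))), (∀ U ∈ 𝒰, IsOpen U) → ⋃₀ 𝒰 = Set.univ →
      ∃ h : X ≃ₜ Quot r, ∀ x : X, ∃ U ∈ 𝒰, Quot.mk r x ∈ U ∧ h x ∈ U) ∧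
    Nonempty (X ≃ₜ Quot r) := by
  classical
  have he : Equivalence r := shrink_aux_equiv hcov hdisj hr
  haveI hT2 : T2Space (Quot r) := shrink_aux_t2 hne hcpt hcov hdisj hr husc
  haveI : SecondCountableTopology (Quot r) := shrink_aux_sct hne hcpt hcov hdisj hr husc
  haveI : TopologicalSpace.MetrizableSpace (Quot r) := inferInstance
  letI mY : MetricSpace (Quot r) := TopologicalSpace.metrizableSpaceMetric (Quot r)
  have main : ∀ (𝒰 : Set (Set (Quot r))), (∀ U ∈ 𝒰, IsOpen U) → ⋃₀ 𝒰 = Set.univ →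
      ∃ h : X ≃ₜ Quot r, ∀ x : X, ∃ U ∈ 𝒰, Quot.mk r x ∈ U ∧ h x ∈ U := by
    intro 𝒰 h𝒰o h𝒰c
    obtain ⟨δL, hδL, hLeb⟩ := lebesgue_number_lemma_of_metric_sUnion
      (isCompact_univ : IsCompact (Set.univ : Set (Quot r))) h𝒰o (by rw [h𝒰c])
    -- the one-step shrinking lemma
    have step : ∀ (n : ℕ) (Θ : X ≃ₜ X) (ε : ℝ), 0 < ε →
        ∃ (Θ' : X ≃ₜ X) (ε' : ℝ),
          0 < ε' ∧ ε' ≤ ε / 2 ∧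
          (∀ x : X, dist (Quot.mk r (Θ'.symm x)) (Quot.mk r (Θ.symm x)) < ε') ∧
          (∀ g ∈ G, ∀ a ∈ Θ' '' g, ∀ b ∈ Θ' '' g, dist a b ≤ (1/2 : ℝ)^(n+1)) ∧
          ((∀ g ∈ G, ∀ a ∈ Θ '' g, ∀ b ∈ Θ '' g, dist a b ≤ (1/2 : ℝ)^n) →
            ∀ a b : X, dist (Quot.mk r (Θ.symm a)) (Quot.mk r (Θ.symm b)) ≤ 5 * ε' →
              dist a b ≤ 2 * (1/2 : ℝ)^n) := by
      intro n Θ ε hε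
      -- a modulus of injectivity for the current map
      obtain ⟨η, hη0, hηP⟩ : ∃ η : ℝ, 0 < η ∧
          ((∀ g ∈ G, ∀ a ∈ Θ '' g, ∀ b ∈ Θ '' g, dist a b ≤ (1/2 : ℝ)^n) →
            ∀ a b : X, dist (Quot.mk r (Θ.symm a)) (Quot.mk r (Θ.symm b)) < η →
              dist a b ≤ 2 * (1/2 : ℝ)^n) := by
        by_cases hsm : ∀ g ∈ G, ∀ a ∈ Θ '' g, ∀ b ∈ Θ '' g, dist a b ≤ (1/2 : ℝ)^n
        · set fΘ : X → Quot r := fun a => Quot.mk r (Θ.symm a) with hfΘ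
          have hfc : Continuous fΘ := continuous_quot_mk.comp Θ.symm.continuous
          set K : Set (X × X) := {p | 2 * (1/2 : ℝ)^n ≤ dist p.1 p.2} with hK
          have hKcl : IsClosed K := isClosed_le continuous_const (continuous_fst.dist continuous_snd)
          have hKcpt : IsCompact K := hKcl.isCompact
          set M : Set (Quot r × Quot r) := (fun p : X × X => (fΘ p.1, fΘ p.2)) '' K with hM
          have hMcpt : IsCompact M :=
            hKcpt.image ((hfc.comp continuous_fst).prodMk (hfc.comp continuous_snd))
          rcases Set.eq_empty_or_nonempty K with hKe | hKne
          · refine ⟨1, one_pos, fun _ a b _ => ?_⟩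
            by_contra hcon
            have : (a, b) ∈ K := le_of_lt (lt_of_not_ge hcon)
            rw [hKe] at this
            exact this
          · have hMne : M.Nonempty := hKne.image _
            obtain ⟨q, hqM, hqmin⟩ := hMcpt.exists_isMinOn hMne
              ((continuous_fst.dist continuous_snd).continuousOn)
            have hq0 : 0 < dist q.1 q.2 := by
              rcases hqM with ⟨p, hpK, hpq⟩
              rw [dist_pos]
              intro hqeq
              have hq1 : q.1 = fΘ p.1 := by rw [← hpq]
              have hq2 : q.2 = fΘ p.2 := by rw [← hpq]
              have hmk : Quot.mk r (Θ.symm p.1) = Quot.mk r (Θ.symm p.2) := by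
                have := hqeq; rw [hq1, hq2] at this; exact this
              obtain ⟨g, hg, h1, h2⟩ := (hr _ _).1 ((shrink_aux_mk_eq he _ _).1 hmk)
              have hp1 : p.1 ∈ Θ '' g := ⟨Θ.symm p.1, h1, Θ.apply_symm_apply p.1⟩
              have hp2 : p.2 ∈ Θ '' g := ⟨Θ.symm p.2, h2, Θ.apply_symm_apply p.2⟩
              have hle : dist p.1 p.2 ≤ (1/2 : ℝ)^n := hsm g hg _ hp1 _ hp2
              have hge : 2 * (1/2 : ℝ)^n ≤ dist p.1 p.2 := hpK
              have hpow : 0 < (1/2 : ℝ)^n := by positivity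
              linarith
            refine ⟨dist q.1 q.2, hq0, fun _ a b hab => ?_⟩
            by_contra hcon
            have hKab : (a, b) ∈ K := le_of_lt (lt_of_not_ge hcon)
            have hMab : (fΘ a, fΘ b) ∈ M := ⟨(a, b), hKab, rfl⟩
            have := hqmin hMab
            simp only [Set.mem_setOf_eq] at this
            exact absurd hab (not_lt.2 this)
        · exact ⟨1, one_pos, fun h => absurd h hsm⟩
      set ε' : ℝ := min (ε / 2) (η / 6) with hε'
      have hε'0 : 0 < ε' := lt_min (by linarith) (by linarith)
      -- apply shrinkability
      set 𝒰' : Set (Set (Quot r)) := {U | ∃ y : Quot r, U = Metric.ball y (ε' / 2)} with h𝒰'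
      have h1o : ∀ U ∈ 𝒰', IsOpen U := by rintro U ⟨y, rfl⟩; exact Metric.isOpen_ball
      have h1c : ⋃₀ 𝒰' = Set.univ := by
        apply Set.eq_univ_of_forall
        intro y
        exact ⟨Metric.ball y (ε' / 2), ⟨y, rfl⟩, Metric.mem_ball_self (by positivity)⟩
      set ρ : ℝ := (1/2 : ℝ)^(n+1) / 2 with hρ
      have hρ0 : 0 < ρ := by positivity
      set 𝒱 : Set (Set X) := {V | ∃ c : X, V = Θ ⁻¹' Metric.ball c ρ} with h𝒱
      have h2o : ∀ V ∈ 𝒱, IsOpen V := by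
        rintro V ⟨c, rfl⟩; exact Metric.isOpen_ball.preimage Θ.continuous
      have h2c : ⋃₀ 𝒱 = Set.univ := by
        apply Set.eq_univ_of_forall
        intro x
        exact ⟨Θ ⁻¹' Metric.ball (Θ x) ρ, ⟨Θ x, rfl⟩, by
          simp [Set.mem_preimage, Metric.mem_ball_self hρ0]⟩
      obtain ⟨h, hclose, hshr⟩ := hshrink 𝒰' h1o h1c 𝒱 h2o h2c
      refine ⟨h.trans Θ, ε', hε'0, min_le_left _ _, ?_, ?_, ?_⟩
      · intro x
        obtain ⟨U, ⟨y, rfl⟩, hU1, hU2⟩ := hclose (h.symm (Θ.symm x))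
        rw [Set.mem_preimage, Homeomorph.apply_symm_apply] at hU2
        rw [Set.mem_preimage, Metric.mem_ball] at hU1
        rw [Metric.mem_ball] at hU2
        have heq : (h.trans Θ).symm x = h.symm (Θ.symm x) := rfl
        rw [heq]
        calc dist (Quot.mk r (h.symm (Θ.symm x))) (Quot.mk r (Θ.symm x))
            ≤ dist (Quot.mk r (h.symm (Θ.symm x))) y + dist (Quot.mk r (Θ.symm x)) y :=
              dist_triangle_right _ _ _
          _ < ε' / 2 + ε' / 2 := add_lt_add hU1 hU2
          _ = ε' := by ring
      · intro g hg a ha b hb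
        obtain ⟨V, ⟨c, rfl⟩, hV⟩ := hshr g hg
        have himg : (h.trans Θ) '' g = Θ '' (h '' g) := by
          rw [← Set.image_comp]; rfl
        rw [himg] at ha hb
        obtain ⟨a', ha', rfl⟩ := ha
        obtain ⟨b', hb', rfl⟩ := hb
        have hac : dist (Θ a') c < ρ := by
          have := hV ha'; rwa [Set.mem_preimage, Metric.mem_ball] at this
        have hbc : dist (Θ b') c < ρ := by
          have := hV hb'; rwa [Set.mem_preimage, Metric.mem_ball] at this
        calc dist (Θ a') (Θ b') ≤ dist (Θ a') c + dist (Θ b') c := dist_triangle_right _ _ _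
          _ ≤ ρ + ρ := by linarith
          _ = (1/2 : ℝ)^(n+1) := by rw [hρ]; ring
      · intro hsm a b hab
        refine hηP hsm a b (lt_of_le_of_lt hab ?_)
        have h6 : ε' ≤ η / 6 := min_le_right _ _
        linarith
    -- recursively build the sequence of homeomorphisms
    choose! F E hE0 hEhalf hcl hsm hinj using step
    obtain ⟨ε₀, hε₀def⟩ : ∃ e : ℝ, e = δL / 3 := ⟨_, rfl⟩
    have hε₀pos : 0 < ε₀ := by rw [hε₀def]; positivity
    let seq : ℕ → (X ≃ₜ X) × ℝ := fun n =>
      Nat.rec (⟨Homeomorph.refl X, ε₀⟩ : (X ≃ₜ X) × ℝ)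
        (fun n p => ⟨F n p.1 p.2, E n p.1 p.2⟩) n
    set Θs : ℕ → X ≃ₜ X := fun n => (seq n).1 with hΘs
    set εs : ℕ → ℝ := fun n => (seq n).2 with hεs
    have hseq1 : ∀ n, Θs (n + 1) = F n (Θs n) (εs n) := fun n => rfl
    have hseq2 : ∀ n, εs (n + 1) = E n (Θs n) (εs n) := fun n => rfl
    have hε00 : εs 0 = ε₀ := rfl
    have hpos : ∀ n, 0 < εs n := by
      intro n
      induction n with
      | zero => exact hε₀pos
      | succ n ih => rw [hseq2]; exact hE0 n (Θs n) (εs n) ih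
    have hhalf : ∀ n, εs (n + 1) ≤ εs n / 2 := by
      intro n; rw [hseq2]; exact hEhalf n (Θs n) (εs n) (hpos n)
    have hεsle : ∀ n, εs n ≤ ε₀ / 2 ^ n := by
      intro n
      induction n with
      | zero => simp [hε00]
      | succ n ih =>
        have h1 := hhalf n
        have h2 : εs n / 2 ≤ ε₀ / 2 ^ n / 2 := by linarith
        calc εs (n + 1) ≤ ε₀ / 2 ^ n / 2 := le_trans h1 h2
          _ = ε₀ / 2 ^ (n + 1) := by rw [div_div, pow_succ]
    set f' : ℕ → X → Quot r := fun n x => Quot.mk r ((Θs n).symm x) with hf'def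
    have hstepdist : ∀ n x, dist (f' (n + 1) x) (f' n x) < εs (n + 1) := by
      intro n x
      have := hcl n (Θs n) (εs n) (hpos n) x
      rw [hseq2]
      exact this
    have hdistnm : ∀ n m, n ≤ m → ∀ x,
        dist (f' n x) (f' m x) ≤ 2 * εs (n + 1) - 2 * εs (m + 1) := by
      intro n m hnm x
      induction m, hnm using Nat.le_induction with
      | base => rw [dist_self]; linarith
      | succ m hnm ih =>
        have hh := hhalf (m + 1)
        calc dist (f' n x) (f' (m + 1) x)
            ≤ dist (f' n x) (f' m x) + dist (f' (m + 1) x) (f' m x) := by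
              rw [dist_comm (f' (m + 1) x)]; exact dist_triangle _ _ _
          _ ≤ (2 * εs (n + 1) - 2 * εs (m + 1)) + εs (m + 1) :=
              add_le_add ih (le_of_lt (hstepdist m x))
          _ ≤ 2 * εs (n + 1) - 2 * εs (m + 1 + 1) := by linarith
    have hcauchy : ∀ x, CauchySeq fun n => f' n x := by
      intro x
      apply cauchySeq_of_le_geometric_two (C := 2 * ε₀)
      intro n
      have h2e : (2:ℝ) * ε₀ / 2 = ε₀ := by ring
      rw [h2e]
      calc dist (f' n x) (f' (n + 1) x) ≤ εs (n + 1) := by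
            rw [dist_comm]; exact le_of_lt (hstepdist n x)
        _ ≤ ε₀ / 2 ^ (n + 1) := hεsle (n + 1)
        _ ≤ ε₀ / 2 ^ n := div_le_div_of_nonneg_left hε₀pos.le (by positivity)
            (pow_le_pow_right₀ (by norm_num) (Nat.le_succ n))
    have hlim : ∀ x, ∃ y, Tendsto (fun n => f' n x) atTop (𝓝 y) := fun x =>
      cauchySeq_tendsto_of_complete (hcauchy x)
    choose f hf using hlim
    have hdistf : ∀ n x, dist (f' n x) (f x) ≤ 2 * εs (n + 1) := by
      intro n x
      have ht : Tendsto (fun m => dist (f' n x) (f' m x)) atTop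
          (𝓝 (dist (f' n x) (f x))) := tendsto_const_nhds.dist (hf x)
      apply le_of_tendsto ht
      filter_upwards [eventually_ge_atTop n] with m hm
      have := hdistnm n m hm x
      have := hpos (m + 1)
      linarith
    have hcontf' : ∀ n : ℕ, Continuous (f' n) := fun n =>
      continuous_quot_mk.comp (Θs n).symm.continuous
    have hpowt : Tendsto (fun n : ℕ => ε₀ / 2 ^ n) atTop (𝓝 0) := by
      have h1 : Tendsto (fun n : ℕ => ε₀ * (1/2 : ℝ) ^ n) atTop (𝓝 (ε₀ * 0)) :=
        tendsto_const_nhds.mul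
          (tendsto_pow_atTop_nhds_zero_of_lt_one (by norm_num) (by norm_num))
      rw [mul_zero] at h1
      convert h1 using 2 with n
      rw [div_eq_mul_inv, one_div, inv_pow]
    have htu : TendstoUniformly (fun n x => f' n x) f atTop := by
      rw [Metric.tendstoUniformly_iff]
      intro ε hε
      have hev : ∀ᶠ n : ℕ in atTop, ε₀ / 2 ^ n < ε / 2 :=
        hpowt.eventually (gt_mem_nhds (by positivity))
      filter_upwards [hev] with n hn x
      have h1 : dist (f' n x) (f x) ≤ 2 * εs (n + 1) := hdistf n x
      have h2 : εs (n + 1) ≤ ε₀ / 2 ^ (n + 1) := hεsle (n + 1)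
      have h3 : (2:ℝ) * (ε₀ / 2 ^ (n + 1)) = ε₀ / 2 ^ n := by
        rw [pow_succ]; field_simp
      rw [dist_comm]
      calc dist (f' n x) (f x) ≤ 2 * εs (n + 1) := h1
        _ ≤ 2 * (ε₀ / 2 ^ (n + 1)) := by linarith
        _ = ε₀ / 2 ^ n := h3
        _ < ε / 2 := hn
        _ < ε := by linarith
    have hcont : Continuous f := htu.continuous (Frequently.of_forall hcontf')
    have hhalfpow : Tendsto (fun n : ℕ => (1/2 : ℝ) ^ n) atTop (𝓝 0) :=
      tendsto_pow_atTop_nhds_zero_of_lt_one (by norm_num) (by norm_num)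
    have hinj' : Function.Injective f := by
      intro a b hab
      have key : ∀ n : ℕ, dist a b ≤ 2 * (1/2 : ℝ) ^ (n + 1) := by
        intro n
        have hsmall : ∀ g ∈ G, ∀ p ∈ Θs (n + 1) '' g, ∀ q ∈ Θs (n + 1) '' g,
            dist p q ≤ (1/2 : ℝ) ^ (n + 1) := by
          rw [hseq1]
          exact hsm n (Θs n) (εs n) (hpos n)
        have h5 : dist (f' (n + 1) a) (f' (n + 1) b) ≤ 5 * εs (n + 2) := by
          have hta := hdistf (n + 1) a
          have htb := hdistf (n + 1) b
          have htr : dist (f' (n + 1) a) (f' (n + 1) b)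
              ≤ dist (f' (n + 1) a) (f a) + dist (f' (n + 1) b) (f b) := by
            rw [hab]; exact dist_triangle_right _ _ _
          have := hpos (n + 2)
          linarith
        have happ := hinj (n + 1) (Θs (n + 1)) (εs (n + 1)) (hpos (n + 1)) hsmall a b
        rw [← hseq2 (n + 1)] at happ
        exact happ h5
      have h0 : Tendsto (fun n : ℕ => 2 * (1/2 : ℝ) ^ (n + 1)) atTop (𝓝 0) := by
        have h1 : Tendsto (fun n : ℕ => (1/2 : ℝ) ^ (n + 1)) atTop (𝓝 0) :=
          hhalfpow.comp (tendsto_add_atTop_nat 1)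
        have h2 := h1.const_mul (2 : ℝ)
        rw [mul_zero] at h2
        exact h2
      have : dist a b ≤ 0 := ge_of_tendsto h0 (Eventually.of_forall key)
      exact dist_le_zero.1 this
    have hsurj : Function.Surjective f := by
      intro y
      by_contra hy
      push_neg at hy
      have hyr : y ∉ Set.range f := by rintro ⟨x, rfl⟩; exact hy x rfl
      have hrc : IsClosed (Set.range f) := (isCompact_range hcont).isClosed
      obtain ⟨ε, hε, hball⟩ := Metric.isOpen_iff.1 hrc.isOpen_compl y hyr
      obtain ⟨n, hn⟩ := ((Metric.tendstoUniformly_iff.1 htu) ε hε).exists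
      obtain ⟨z, hz⟩ := Quot.exists_rep y
      have hfx : f' n (Θs n z) = y := by
        show Quot.mk r ((Θs n).symm (Θs n z)) = y
        rw [Homeomorph.symm_apply_apply]
        exact hz
      have hd : dist (f (Θs n z)) y < ε := by
        have := hn (Θs n z)
        rwa [hfx] at this
      exact hball (Metric.mem_ball.2 hd) ⟨Θs n z, rfl⟩
    set e : X ≃ Quot r := Equiv.ofBijective f ⟨hinj', hsurj⟩ with hedef
    have hecont : Continuous e := hcont
    refine ⟨Continuous.homeoOfEquivCompactToT2 hecont, ?_⟩
    intro x
    obtain ⟨U, hU𝒰, hballU⟩ := hLeb (Quot.mk r x) (Set.mem_univ _)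
    refine ⟨U, hU𝒰, hballU (Metric.mem_ball_self hδL), hballU ?_⟩
    have h0 : f' 0 x = Quot.mk r x := rfl
    have hd0 : dist (Quot.mk r x) (f x) ≤ 2 * εs 1 := by
      have := hdistf 0 x
      rwa [h0] at this
    have h1 : εs 1 ≤ εs 0 / 2 := hhalf 0
    have hex : (Continuous.homeoOfEquivCompactToT2 hecont) x = f x := rfl
    rw [hex, Metric.mem_ball, dist_comm]
    have hεs0 : εs 0 = δL / 3 := by rw [hε00, hε₀def]
    calc dist (Quot.mk r x) (f x) ≤ 2 * εs 1 := hd0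
      _ ≤ 2 * (εs 0 / 2) := by linarith
      _ = εs 0 := by ring
      _ = δL / 3 := hεs0
      _ < δL := by linarith
  refine ⟨main, ?_⟩
  obtain ⟨h, -⟩ := main {Set.univ}
    (by rintro U hU; rw [Set.mem_singleton_iff] at hU; subst hU; exact isOpen_univ)
    (by simp)
  exact ⟨h⟩
end

section
/- ℝⁿ, for n ≥ 3, has the disjoint arcs property: any two paths f, g: [0,1] → ℝⁿ can be approximated arbitrarily closely (in the sup metric) by paths with disjoint images. -/
open unitInterval Topology

open scoped NNReal

/-- Polynomial approximation of a continuous real function on `I`. -/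
lemma poly_approx_aux (h : C(I, ℝ)) {δ : ℝ} (hδ : 0 < δ) :
    ∃ p : Polynomial ℝ, ∀ t : I, |h t - p.eval (t : ℝ)| < δ := by
  have hmem : h ∈ (polynomialFunctions I).topologicalClosure := by
    rw [polynomialFunctions_closure_eq_top']; trivial
  have hmem' : h ∈ closure (polynomialFunctions I : Set C(I, ℝ)) := hmem
  rcases Metric.mem_closure_iff.1 hmem' δ hδ with ⟨q, hq, hdq⟩
  rw [polynomialFunctions_coe] at hq
  rcases hq with ⟨p, rfl⟩
  refine ⟨p, fun t => ?_⟩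
  have h1 : dist (h t) ((Polynomial.toContinuousMapOnAlgHom I p) t) ≤
      dist h (Polynomial.toContinuousMapOnAlgHom I p) :=
    ContinuousMap.dist_apply_le_dist t
  have h2 : (Polynomial.toContinuousMapOnAlgHom I p) t = p.eval (t : ℝ) := rfl
  rw [h2] at h1
  calc |h t - p.eval (t : ℝ)| = dist (h t) (p.eval (t : ℝ)) := (Real.dist_eq _ _).symm
    _ ≤ dist h (Polynomial.toContinuousMapOnAlgHom I p) := h1
    _ < δ := hdq

/-- A polynomial composed with the projection to `[0,1]` is Lipschitz. -/
lemma poly_lip_aux (p : Polynomial ℝ) :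
    ∃ K : ℝ≥0, LipschitzWith K
      (fun x : ℝ => p.eval (Set.projIcc (0:ℝ) 1 zero_le_one x : ℝ)) := by
  obtain ⟨C, hC⟩ := (isCompact_Icc (a := (0:ℝ)) (b := 1)).exists_bound_of_continuousOn
    (Continuous.continuousOn (p.derivative.continuous_aeval))
  have hlip : LipschitzOnWith (Real.toNNReal C) (fun x => p.eval x) (Set.Icc (0:ℝ) 1) := by
    apply (convex_Icc (0:ℝ) 1).lipschitzOnWith_of_nnnorm_deriv_le
      (fun x _ => p.differentiableAt)
    intro x hx
    have hx' : ‖p.derivative.eval x‖ ≤ C := by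
      simpa [Polynomial.aeval_def, Polynomial.eval₂_eq_eval_map] using hC x hx
    have : deriv (fun x => p.eval x) x = p.derivative.eval x := p.deriv
    rw [this, ← NNReal.coe_le_coe, coe_nnnorm, Real.coe_toNNReal']
    exact le_max_of_le_left hx'
  have hres : LipschitzWith (Real.toNNReal C)
      ((Set.Icc (0:ℝ) 1).restrict fun x => p.eval x) := hlip.to_restrict
  exact ⟨Real.toNNReal C * 1, hres.comp (LipschitzWith.projIcc zero_le_one)⟩

/-- A map into Euclidean space whose coordinates are all `K`-Lipschitz is Lipschitz. -/
lemma lipschitz_euclid_of_coords {α : Type*} [PseudoMetricSpace α] {n : ℕ} {K : ℝ≥0}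
    {F : α → EuclideanSpace ℝ (Fin n)} (h : ∀ i, LipschitzWith K (fun x => F x i)) :
    LipschitzWith (Real.toNNReal (Real.sqrt n) * K) F := by
  apply LipschitzWith.of_dist_le_mul
  intro x y
  rw [EuclideanSpace.dist_eq]
  have hsum : (∑ i, dist (F x i) (F y i) ^ 2) ≤ (n : ℝ) * ((K : ℝ) * dist x y) ^ 2 := by
    calc (∑ i, dist (F x i) (F y i) ^ 2) ≤ ∑ _i : Fin n, ((K : ℝ) * dist x y) ^ 2 :=
          Finset.sum_le_sum fun i _ =>
            pow_le_pow_left₀ dist_nonneg ((h i).dist_le_mul x y) 2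
      _ = (n : ℝ) * ((K : ℝ) * dist x y) ^ 2 := by
          simp [Finset.sum_const, Finset.card_univ]
  calc Real.sqrt (∑ i, dist (F x i) (F y i) ^ 2)
      ≤ Real.sqrt ((n : ℝ) * ((K : ℝ) * dist x y) ^ 2) := Real.sqrt_le_sqrt hsum
    _ = Real.sqrt n * ((K : ℝ) * dist x y) := by
        rw [Real.sqrt_mul (by positivity), Real.sqrt_sq (by positivity)]
    _ = ↑(Real.toNNReal (Real.sqrt n) * K) * dist x y := by
        rw [NNReal.coe_mul, Real.coe_toNNReal _ (Real.sqrt_nonneg _)]; ring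

/-- Coordinatewise distance bound gives a Euclidean distance bound. -/
lemma euclid_dist_le_of_coords {n : ℕ} {x y : EuclideanSpace ℝ (Fin n)} {c : ℝ} (hc : 0 ≤ c)
    (h : ∀ i, dist (x i) (y i) ≤ c) : dist x y ≤ Real.sqrt n * c := by
  rw [EuclideanSpace.dist_eq]
  have hsum : (∑ i, dist (x i) (y i) ^ 2) ≤ (n : ℝ) * c ^ 2 := by
    calc (∑ i, dist (x i) (y i) ^ 2) ≤ ∑ _i : Fin n, c ^ 2 :=
          Finset.sum_le_sum fun i _ => pow_le_pow_left₀ dist_nonneg (h i) 2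
      _ = (n : ℝ) * c ^ 2 := by simp [Finset.sum_const, Finset.card_univ]
  calc Real.sqrt (∑ i, dist (x i) (y i) ^ 2) ≤ Real.sqrt ((n : ℝ) * c ^ 2) :=
        Real.sqrt_le_sqrt hsum
    _ = Real.sqrt n * c := by rw [Real.sqrt_mul (by positivity), Real.sqrt_sq hc]

/-- ℝⁿ, n ≥ 3, has the disjoint arcs property: any two paths can be
approximated arbitrarily closely in the sup metric by paths with disjoint images. -/
theorem euclidean_disjoint_arcs_property (n : ℕ) (hn : 3 ≤ n)
    (f g : C(I, EuclideanSpace ℝ (Fin n))) (ε : ℝ) (hε : 0 < ε) :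
    ∃ f' g' : C(I, EuclideanSpace ℝ (Fin n)),
      (∀ t, dist (f t) (f' t) < ε) ∧ (∀ t, dist (g t) (g' t) < ε) ∧
      Set.range f' ∩ Set.range g' = ∅ := by
  classical
  set δ : ℝ := ε / (4 * (n + 1)) with hδdef
  have hδ : 0 < δ := by positivity
  -- key bound : √n * δ < ε / 2
  have hsqrt : Real.sqrt n * δ < ε / 2 := by
    have h1 : Real.sqrt n ≤ (n : ℝ) + 1 := by
      have : Real.sqrt n ≤ Real.sqrt (((n : ℝ) + 1) ^ 2) := by
        apply Real.sqrt_le_sqrt; nlinarith [Nat.cast_nonneg (α := ℝ) n]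
      rwa [Real.sqrt_sq (by positivity)] at this
    have h2 : Real.sqrt n * δ ≤ ((n : ℝ) + 1) * δ := by
      apply mul_le_mul_of_nonneg_right h1 hδ.le
    have h3 : ((n : ℝ) + 1) * δ = ε / 4 := by
      rw [hδdef]; field_simp
    rw [h3] at h2
    linarith
  -- coordinate polynomials
  have hPexists : ∀ i : Fin n, ∃ p : Polynomial ℝ, ∀ t : I, |f t i - p.eval (t : ℝ)| < δ :=
    fun i => poly_approx_aux ⟨fun t => f t i,
      (EuclideanSpace.proj (𝕜 := ℝ) i).continuous.comp f.continuous⟩ hδ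
  have hQexists : ∀ i : Fin n, ∃ p : Polynomial ℝ, ∀ t : I, |g t i - p.eval (t : ℝ)| < δ :=
    fun i => poly_approx_aux ⟨fun t => g t i,
      (EuclideanSpace.proj (𝕜 := ℝ) i).continuous.comp g.continuous⟩ hδ
  choose P hP using hPexists
  choose Q hQ using hQexists
  -- Lipschitz constants for each coordinate
  choose KP hKP using fun i => poly_lip_aux (P i)
  choose KQ hKQ using fun i => poly_lip_aux (Q i)
  set K : ℝ≥0 := (Finset.univ.sup KP) ⊔ (Finset.univ.sup KQ) with hK
  set pr : ℝ → ℝ := fun x => (Set.projIcc (0:ℝ) 1 zero_le_one x : ℝ) with hpr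
  set F : ℝ → EuclideanSpace ℝ (Fin n) := fun x => WithLp.toLp 2 (fun i => (P i).eval (pr x)) with hFdef
  set G : ℝ → EuclideanSpace ℝ (Fin n) := fun x => WithLp.toLp 2 (fun i => (Q i).eval (pr x)) with hGdef
  have hFlip : LipschitzWith (Real.toNNReal (Real.sqrt n) * K) F := by
    apply lipschitz_euclid_of_coords
    intro i
    exact (hKP i).weaken (le_sup_of_le_left (Finset.le_sup (Finset.mem_univ i)))
  have hGlip : LipschitzWith (Real.toNNReal (Real.sqrt n) * K) G := by
    apply lipschitz_euclid_of_coords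
    intro i
    exact (hKQ i).weaken (le_sup_of_le_right (Finset.le_sup (Finset.mem_univ i)))
  have hprt : ∀ t : I, pr (t : ℝ) = (t : ℝ) := by
    intro t
    simp only [hpr]
    rw [show Set.projIcc (0:ℝ) 1 zero_le_one (t : ℝ) = ⟨(t : ℝ), t.2⟩ from
      Set.projIcc_val zero_le_one ⟨(t : ℝ), t.2⟩]
  -- the difference map on a square
  set Φ : (Fin 2 → ℝ) → EuclideanSpace ℝ (Fin n) := fun p => F (p 0) - G (p 1) with hΦdef
  have hΦlip : LipschitzWith
      ((Real.toNNReal (Real.sqrt n) * K) * 1 + (Real.toNNReal (Real.sqrt n) * K) * 1) Φ :=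
    (hFlip.comp (LipschitzWith.eval 0)).sub (hGlip.comp (LipschitzWith.eval 1))
  have hdim : dimH (Set.range Φ) ≤ 2 := by
    calc dimH (Set.range Φ) ≤ dimH (Set.univ : Set (Fin 2 → ℝ)) := hΦlip.dimH_range_le
      _ = 2 := by rw [Real.dimH_univ_pi_fin 2]; norm_num
  -- find a translation vector avoiding the difference set
  have hns : ¬ (Metric.ball (0 : EuclideanSpace ℝ (Fin n)) (ε / 4) ⊆ Set.range Φ) := by
    intro hsub
    have hnhds : Set.range Φ ∈ 𝓝 (0 : EuclideanSpace ℝ (Fin n)) :=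
      Filter.mem_of_superset (Metric.ball_mem_nhds _ (by positivity)) hsub
    have hd := Real.dimH_of_mem_nhds hnhds
    rw [finrank_euclideanSpace_fin] at hd
    rw [hd] at hdim
    have : (n : ℕ) ≤ 2 := by exact_mod_cast hdim
    omega
  obtain ⟨v, hvball, hvD⟩ := Set.not_subset.1 hns
  have hvnorm : ‖v‖ < ε / 4 := by
    simpa [Metric.mem_ball, dist_zero_right] using hvball
  -- the approximating paths
  refine ⟨⟨fun t => F (t : ℝ), hFlip.continuous.comp continuous_subtype_val⟩,
      ⟨fun t => G (t : ℝ) + v,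
        (hGlip.continuous.comp continuous_subtype_val).add continuous_const⟩, ?_, ?_, ?_⟩
  · intro t
    have hcoord : ∀ i, dist (f t i) (F (t : ℝ) i) ≤ δ := by
      intro i
      have := hP i t
      rw [show F (t : ℝ) i = (P i).eval (pr (t : ℝ)) from rfl, hprt t, Real.dist_eq]
      exact this.le
    have := euclid_dist_le_of_coords hδ.le hcoord
    calc dist (f t) (F (t : ℝ)) ≤ Real.sqrt n * δ := this
      _ < ε / 2 := hsqrt
      _ < ε := by linarith
  · intro t
    have hcoord : ∀ i, dist (g t i) (G (t : ℝ) i) ≤ δ := by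
      intro i
      have := hQ i t
      rw [show G (t : ℝ) i = (Q i).eval (pr (t : ℝ)) from rfl, hprt t, Real.dist_eq]
      exact this.le
    have h1 : dist (g t) (G (t : ℝ)) ≤ Real.sqrt n * δ := euclid_dist_le_of_coords hδ.le hcoord
    have h2 : dist (G (t : ℝ)) (G (t : ℝ) + v) ≤ ε / 4 := by
      rw [dist_eq_norm]
      simpa using hvnorm.le
    calc dist (g t) (G (t : ℝ) + v) ≤ dist (g t) (G (t : ℝ)) + dist (G (t : ℝ)) (G (t : ℝ) + v) :=
          dist_triangle _ _ _
      _ ≤ Real.sqrt n * δ + ε / 4 := add_le_add h1 h2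
      _ < ε / 2 + ε / 4 := by linarith
      _ < ε := by linarith
  · rw [Set.eq_empty_iff_forall_notMem]
    rintro x ⟨⟨s, hs⟩, ⟨t, ht⟩⟩
    apply hvD
    refine ⟨![(s : ℝ), (t : ℝ)], ?_⟩
    have hFs : F (s : ℝ) = x := hs
    have hGt : G (t : ℝ) + v = x := ht
    have hGt' : G (t : ℝ) = x - v := by rw [← hGt]; abel
    simp only [hΦdef, Matrix.cons_val_zero, Matrix.cons_val_one, Matrix.head_cons]
    rw [hFs, hGt']
    abel
end

section
/- If G is a shrinkable upper semicontinuous decomposition of ℝⁿ into compact sets, then each element g ∈ G is cell-like. -/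
/-- A compact subset is cell-like if it contracts to a point in each of its
neighborhoods. -/
def IsCellLike {α : Type*} [TopologicalSpace α] (X : Set α) : Prop :=
  IsCompact X ∧ ∀ (U : Set α), IsOpen U → ∀ (hXU : X ⊆ U),
    ∃ u : U, ContinuousMap.Homotopic
      ⟨Set.inclusion hXU, continuous_inclusion hXU⟩ (ContinuousMap.const _ u)

/-- if `G` is a shrinkable upper semicontinuous decomposition of ℝⁿ
into compact sets, then each element of `G` is cell-like. -/
theorem shrinkable_elements_cellLike {n : ℕ}
    (G : Set (Set (EuclideanSpace ℝ (Fin n))))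
    (hne : ∀ g ∈ G, g.Nonempty)
    (hcpt : ∀ g ∈ G, IsCompact g)
    (hcov : ∀ x, ∃ g ∈ G, x ∈ g)
    (hdisj : ∀ g ∈ G, ∀ g' ∈ G, g ≠ g' → Disjoint g g')
    (r : EuclideanSpace ℝ (Fin n) → EuclideanSpace ℝ (Fin n) → Prop)
    (hr : ∀ x y, r x y ↔ ∃ g ∈ G, x ∈ g ∧ y ∈ g)
    (husc : IsClosedMap (Quot.mk r))
    -- shrinkability:
    (hshrink : ∀ (𝒰 : Set (Set (Quot r))), (∀ U ∈ 𝒰, IsOpen U) → ⋃₀ 𝒰 = Set.univ →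
      ∀ (𝒱 : Set (Set (EuclideanSpace ℝ (Fin n)))), (∀ V ∈ 𝒱, IsOpen V) →
        ⋃₀ 𝒱 = Set.univ →
      ∃ h : EuclideanSpace ℝ (Fin n) ≃ₜ EuclideanSpace ℝ (Fin n),
        (∀ x, ∃ U ∈ 𝒰, x ∈ Quot.mk r ⁻¹' U ∧ h x ∈ Quot.mk r ⁻¹' U) ∧
        (∀ g ∈ G, ∃ V ∈ 𝒱, h '' g ⊆ V)) :
    ∀ g ∈ G, IsCellLike g := by
  classical
  intro g hg
  refine ⟨hcpt g hg, ?_⟩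
  intro U hUopen hXU
  obtain ⟨x₀, hx₀⟩ := hne g hg
  -- uniqueness of decomposition elements
  have huniq : ∀ g₁ ∈ G, ∀ g₂ ∈ G, ∀ x : EuclideanSpace ℝ (Fin n),
      x ∈ g₁ → x ∈ g₂ → g₁ = g₂ := by
    intro g₁ h₁ g₂ h₂ x hx1 hx2
    by_contra hne'
    exact Set.disjoint_left.mp (hdisj g₁ h₁ g₂ h₂ hne') hx1 hx2
  have hequiv : Equivalence r := by
    constructor
    · intro x; obtain ⟨g', hg', hx⟩ := hcov x; exact (hr x x).mpr ⟨g', hg', hx, hx⟩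
    · intro x y hxy
      obtain ⟨g', hg', hx, hy⟩ := (hr x y).mp hxy
      exact (hr y x).mpr ⟨g', hg', hy, hx⟩
    · intro x y z hxy hyz
      obtain ⟨g₁, hg₁, hx, hy⟩ := (hr x y).mp hxy
      obtain ⟨g₂, hg₂, hy2, hz⟩ := (hr y z).mp hyz
      have hgg : g₁ = g₂ := huniq g₁ hg₁ g₂ hg₂ y hy hy2
      exact (hr x z).mpr ⟨g₂, hg₂, hgg ▸ hx, hz⟩
  have hqe : ∀ a b, Quot.mk r a = Quot.mk r b ↔ r a b := fun a b => by
    rw [Quot.eq]; exact hequiv.eqvGen_iff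
  have hmemg : ∀ y, r y x₀ → y ∈ g := by
    intro y hy
    obtain ⟨g', hg', hyg', hx₀g'⟩ := (hr y x₀).mp hy
    exact (huniq g' hg' g hg x₀ hx₀g' hx₀) ▸ hyg'
  have hgmem : ∀ y ∈ g, r y x₀ := fun y hy => (hr y x₀).mpr ⟨g, hg, hy, hx₀⟩
  set π := Quot.mk r with hπdef
  -- saturated open neighborhoods of g
  have satQ_open : ∀ ε : ℝ, IsOpen ((π '' (Metric.thickening ε g)ᶜ)ᶜ) := fun ε =>
    (husc _ Metric.isOpen_thickening.isClosed_compl).isOpen_compl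
  have pre_sub : ∀ ε : ℝ,
      π ⁻¹' (π '' (Metric.thickening ε g)ᶜ)ᶜ ⊆ Metric.thickening ε g := by
    intro ε x hx
    by_contra hx'
    exact hx (Set.mem_image_of_mem π hx')
  have g_sub : ∀ ε : ℝ, 0 < ε →
      g ⊆ π ⁻¹' (π '' (Metric.thickening ε g)ᶜ)ᶜ := by
    intro ε hε x hx hmem
    obtain ⟨x', hx', hxx⟩ := hmem
    have hrx : r x' x := (hqe x' x).mp hxx
    have hx'g : x' ∈ g := hmemg x' (hequiv.trans hrx (hgmem x hx))
    exact hx' (Metric.self_subset_thickening hε g hx'g)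
  obtain ⟨δ, hδpos, hδ⟩ := (hcpt g hg).exists_thickening_subset_open hUopen hXU
  obtain ⟨η, hηpos, hη⟩ :=
    (hcpt g hg).exists_thickening_subset_open (satQ_open δ) (g_sub δ hδpos)
  set C := Metric.cthickening (η/2) g with hCdef
  have hCsub : C ⊆ Metric.thickening η g :=
    Metric.cthickening_subset_thickening' hηpos (by linarith) g
  have hgC : g ⊆ C := Metric.self_subset_cthickening g
  -- the three saturated open sets in the quotient
  set Q1 : Set (Quot r) := (π '' (Metric.thickening (η/8) g)ᶜ)ᶜ with hQ1def
  set QW : Set (Quot r) := (π '' (Metric.thickening δ g)ᶜ)ᶜ ∩ {π x₀}ᶜ with hQWdef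
  set Z' : Set (Quot r) := (π '' C)ᶜ with hZ'def
  have hpre_pt : π ⁻¹' {π x₀} = g := by
    ext y
    simp only [Set.mem_preimage, Set.mem_singleton_iff]
    constructor
    · intro hy; exact hmemg y ((hqe y x₀).mp hy)
    · intro hy; exact (hqe y x₀).mpr (hgmem y hy)
  have hptclosed : IsClosed ({π x₀} : Set (Quot r)) := by
    rw [← Topology.IsCoinducing.isClosed_preimage isQuotientMap_quot_mk.isCoinducing]
    rw [show Quot.mk r ⁻¹' {π x₀} = g from hpre_pt]
    exact (hcpt g hg).isClosed
  have hQWopen : IsOpen QW := (satQ_open δ).inter hptclosed.isOpen_compl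
  have hZ'open : IsOpen Z' := (husc C Metric.isClosed_cthickening).isOpen_compl
  set 𝒰 : Set (Set (Quot r)) := {Q1, QW, Z'} with h𝒰def
  have h𝒰open : ∀ W ∈ 𝒰, IsOpen W := by
    intro W hW
    simp only [h𝒰def, Set.mem_insert_iff, Set.mem_singleton_iff] at hW
    rcases hW with rfl | rfl | rfl
    · exact satQ_open (η/8)
    · exact hQWopen
    · exact hZ'open
  have h𝒰cov : ⋃₀ 𝒰 = Set.univ := by
    apply Set.eq_univ_of_forall
    intro q
    obtain ⟨y, rfl⟩ := Quot.exists_rep q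
    by_cases hy : π y ∈ π '' C
    · by_cases hyg : Quot.mk r y = π x₀
      · have hyG : y ∈ g := hmemg y ((hqe y x₀).mp hyg)
        exact ⟨Q1, by simp [h𝒰def], g_sub (η/8) (by linarith) hyG⟩
      · obtain ⟨c, hc, hcy⟩ := hy
        have hcth : c ∈ Metric.thickening η g := hCsub hc
        have hcQ : π c ∈ (π '' (Metric.thickening δ g)ᶜ)ᶜ := hη hcth
        refine ⟨QW, by simp [h𝒰def], ⟨?_, hyg⟩⟩
        show π y ∈ _
        rw [← hcy]; exact hcQ
    · exact ⟨Z', by simp [h𝒰def], hy⟩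
  set 𝒱 : Set (Set (EuclideanSpace ℝ (Fin n))) :=
    {V | ∃ z, V = Metric.ball z (η/8)} with h𝒱def
  have h𝒱open : ∀ V ∈ 𝒱, IsOpen V := by
    rintro V ⟨z, rfl⟩; exact Metric.isOpen_ball
  have h𝒱cov : ⋃₀ 𝒱 = Set.univ := by
    apply Set.eq_univ_of_forall
    intro x
    exact ⟨Metric.ball x (η/8), ⟨x, rfl⟩, Metric.mem_ball_self (by linarith)⟩
  obtain ⟨h, hUprop, hVprop⟩ := hshrink 𝒰 h𝒰open h𝒰cov 𝒱 h𝒱open h𝒱cov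
  obtain ⟨V, hV𝒱, hgV⟩ := hVprop g hg
  obtain ⟨z, rfl⟩ := hV𝒱
  -- the image of g under h is forced into the small saturated neighborhood
  have hforced : ∀ x ∈ g, h x ∈ Metric.thickening (η/8) g := by
    intro x hx
    obtain ⟨W, hW, hx1, hx2⟩ := hUprop x
    simp only [h𝒰def, Set.mem_insert_iff, Set.mem_singleton_iff] at hW
    rcases hW with rfl | rfl | rfl
    · exact pre_sub (η/8) hx2
    · exact absurd ((hqe x x₀).mpr (hgmem x hx)) hx1.2
    · exact absurd (Set.mem_image_of_mem π (hgC hx)) hx1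
  -- the ball containing h '' g lies inside C
  have hballC : Metric.ball z (η/8) ⊆ C := by
    have hx₀b : h x₀ ∈ Metric.ball z (η/8) := hgV ⟨x₀, hx₀, rfl⟩
    obtain ⟨p, hp, hdp⟩ := Metric.mem_thickening_iff.mp (hforced x₀ hx₀)
    intro b hb
    refine Metric.mem_cthickening_of_dist_le b p (η/2) g hp ?_
    have h1 : dist b z < η/8 := hb
    have h2 : dist z (h x₀) < η/8 := by rw [dist_comm]; exact hx₀b
    calc dist b p ≤ dist b z + dist z (h x₀) + dist (h x₀) p :=
          dist_triangle4 b z (h x₀) p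
      _ ≤ η/2 := by linarith
  -- the key property: the h-preimage of the ball lies in U
  have hkey : ∀ w, h w ∈ Metric.ball z (η/8) → w ∈ U := by
    intro w hw
    obtain ⟨W, hW, hw1, hw2⟩ := hUprop w
    simp only [h𝒰def, Set.mem_insert_iff, Set.mem_singleton_iff] at hW
    rcases hW with rfl | rfl | rfl
    · have hwth : w ∈ Metric.thickening η g :=
        Metric.thickening_mono (by linarith) g (pre_sub (η/8) hw1)
      exact hδ (pre_sub δ (hη hwth))
    · exact hδ (pre_sub δ hw1.1)
    · exact absurd (Set.mem_image_of_mem π (hballC hw)) hw2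
  have hη8pos : (0:ℝ) < η/8 := by linarith
  have hzU : h.symm z ∈ U := by
    apply hkey
    rw [Homeomorph.apply_symm_apply]
    exact Metric.mem_ball_self hη8pos
  refine ⟨⟨h.symm z, hzU⟩, ?_⟩
  -- points on segments from h '' g to z stay in the ball
  have hmemF : ∀ t : ℝ, 0 ≤ t → t ≤ 1 → ∀ x : g,
      ((1-t) • (h (x : EuclideanSpace ℝ (Fin n))) + t • z) ∈ Metric.ball z (η/8) := by
    intro t ht0 ht1 x
    have hxb : dist (h (x : EuclideanSpace ℝ (Fin n))) z < η/8 := hgV ⟨x, x.2, rfl⟩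
    rw [Metric.mem_ball, dist_eq_norm]
    have heq : (1-t) • (h (x : EuclideanSpace ℝ (Fin n))) + t • z - z
        = (1-t) • ((h (x : EuclideanSpace ℝ (Fin n))) - z) := by module
    rw [heq, norm_smul]
    have hnv : ‖(h (x : EuclideanSpace ℝ (Fin n))) - z‖ < η/8 := by
      rw [← dist_eq_norm]; exact hxb
    have habs : ‖(1-t)‖ ≤ 1 := by
      rw [Real.norm_eq_abs, abs_le]; constructor <;> linarith
    nlinarith [norm_nonneg ((h (x : EuclideanSpace ℝ (Fin n))) - z),
      norm_nonneg (1-t)]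
  exact ⟨{
    toFun := fun p =>
      ⟨h.symm ((1 - (p.1 : ℝ)) • (h (p.2 : EuclideanSpace ℝ (Fin n))) + (p.1 : ℝ) • z), by
        apply hkey
        rw [Homeomorph.apply_symm_apply]
        exact hmemF _ p.1.2.1 p.1.2.2 p.2⟩
    continuous_toFun := by
      apply Continuous.subtype_mk
      apply h.symm.continuous.comp
      have c1 : Continuous fun p : unitInterval × g => (p.1 : ℝ) :=
        continuous_subtype_val.comp continuous_fst
      have c2 : Continuous fun p : unitInterval × g =>
          h (p.2 : EuclideanSpace ℝ (Fin n)) :=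
        h.continuous.comp (continuous_subtype_val.comp continuous_snd)
      exact ((continuous_const.sub c1).smul c2).add (c1.smul continuous_const)
    map_zero_left := fun x => by
      apply Subtype.ext
      simp
    map_one_left := fun x => by
      apply Subtype.ext
      simp }⟩
end
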